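/- Let d ≥ 1, m = 2d, r, t ∈ ℂ, and let M = (ℤ^d →₀ ℂ) ⊗[ℂ] ℂ^m. For θ ∈ Fin m → ℝ define the walk operator U(θ) = Σ_{a∈Fin m} T_a ⊗ (e^{iθ_a} P_a G_{r,t}) as a linear endomorphism of M, where T_a sends the basis element δ_x to δ_{x + e(a)}. Then for any θ^{(1)},…,θ^{(n)}, the composition U(θ^{(1)}) ∘ ⋯ ∘ U(θ^{(n)}) applied to δ_0 ⊗ |s⟩ equals Σ_{(a_1,…,a_n)∈(Fin m)^n} e^{i(θ^{(1)}_{a_1} + ⋯ + θ^{(n)}_{a_n})} · Ξ(a_1,…,a_n) · ((r−t)/√m + √m·t) · (δ_{e(a_1)+⋯+e(a_n)} ⊗ |a_1⟩). -/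

import Mathlib

noncomputable section

open scoped BigOperators TensorProduct

/-- The complex Euclidean space `ℂ^m`. -/
abbrev H (m : ℕ) := EuclideanSpace ℂ (Fin m)

/-- The computational orthonormal basis vector `|a⟩`. -/
def ket {m : ℕ} (a : Fin m) : H m := EuclideanSpace.single a 1

/-- The uniform superposition `|s⟩ = (1/√m) Σ_a |a⟩`. -/
def ketS (m : ℕ) : H m := ((Real.sqrt m : ℂ))⁻¹ • ∑ a : Fin m, ket a

/-- The outer product `|x⟩⟨y|`, i.e. `v ↦ ⟪y, v⟫ • x`. -/
def outer {m : ℕ} (x y : H m) : H m →L[ℂ] H m := (innerSL ℂ y).smulRight x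

/-- The projection `P_a = |a⟩⟨a|`. -/
def P {m : ℕ} (a : Fin m) : H m →L[ℂ] H m := outer (ket a) (ket a)

/-- The generalized Grover coin `G_{r,t} = (r - t)·I + t·m·|s⟩⟨s|`. -/
def grover (m : ℕ) (r t : ℂ) : H m →L[ℂ] H m :=
  (r - t) • 1 + (t * m) • outer (ketS m) (ketS m)

/-- `Ξ(a_1, …, a_n) = ∏_{j=1}^{n-1} (t + (r - t) δ_{a_j, a_{j+1}})` (empty product is 1). -/
def Xi (m n : ℕ) (r t : ℂ) (a : Fin n → Fin m) : ℂ :=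
  ∏ j : Fin n, if h : (j : ℕ) + 1 < n then
    (t + (r - t) * (if a j = a ⟨(j : ℕ) + 1, h⟩ then 1 else 0)) else 1

/-- The `2d` signed standard basis vectors of `ℤ^d`: `e(2k) = u_k`, `e(2k+1) = -u_k`. -/
def eZ (d : ℕ) (a : Fin (2 * d)) : Fin d → ℤ :=
  Pi.single ⟨(a : ℕ) / 2, by have := a.2; omega⟩ (if (a : ℕ) % 2 = 0 then 1 else -1)

/-- The total Hilbert space `(ℤ^d →₀ ℂ) ⊗ ℂ^{2d}` of position ⊗ coin. -/
abbrev M (d : ℕ) := ((Fin d → ℤ) →₀ ℂ) ⊗[ℂ] H (2 * d)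

/-- The shift `T_a : δ_x ↦ δ_{x + e(a)}` on the position register. -/
def T (d : ℕ) (a : Fin (2 * d)) : ((Fin d → ℤ) →₀ ℂ) →ₗ[ℂ] ((Fin d → ℤ) →₀ ℂ) :=
  Finsupp.lmapDomain ℂ ℂ (fun x => x + eZ d a)

/-- One step `U(θ) = Σ_a T_a ⊗ (e^{iθ_a} P_a G_{r,t})` of the quantum walk with
random phase shifts. -/
def walkOp (d : ℕ) (r t : ℂ) (θ : Fin (2 * d) → ℝ) : Module.End ℂ (M d) :=
  ∑ a : Fin (2 * d),
    TensorProduct.map (T d a)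
      (Complex.exp (Complex.I * (θ a : ℂ)) • (P a * grover (2 * d) r t).toLinearMap)

namespace Scratch
variable {m : ℕ}

lemma inner_ket (a : Fin m) (v : H m) : inner ℂ (ket a) v = v a := by
  simp [ket, EuclideanSpace.inner_single_left]

lemma ket_apply (a b : Fin m) : ket a b = if b = a then 1 else 0 := by
  simp [ket, EuclideanSpace.single_apply]

lemma ketS_apply (b : Fin m) : ketS m b = ((Real.sqrt m : ℂ))⁻¹ := by
  have : (∑ a : Fin m, ket a) b = ∑ a : Fin m, ket a b := by
    rw [WithLp.ofLp_sum, Finset.sum_apply]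
  simp [ketS, this, ket_apply]

lemma inner_ketS (v : H m) : inner ℂ (ketS m) v = ((Real.sqrt m : ℂ))⁻¹ * ∑ b, v b := by
  rw [ketS, inner_smul_left, sum_inner]
  simp only [inner_ket, map_inv₀, Complex.conj_ofReal]

lemma sqrt_mul_self' (hm : 0 < m) : ((Real.sqrt m : ℂ)) * (Real.sqrt m : ℂ) = (m : ℂ) := by
  have : (Real.sqrt m) * (Real.sqrt m) = (m : ℝ) := Real.mul_self_sqrt (by positivity)
  exact_mod_cast this

lemma sqrt_ne_zero' (hm : 0 < m) : ((Real.sqrt m : ℂ)) ≠ 0 := by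
  have : (0:ℝ) < Real.sqrt m := Real.sqrt_pos.mpr (by exact_mod_cast hm)
  exact_mod_cast this.ne'

lemma PG_ket (hm : 0 < m) (r t : ℂ) (a b : Fin m) :
    (P a * grover m r t) (ket b) =
      (t + (r - t) * (if a = b then 1 else 0)) • ket a := by
  have h := sqrt_mul_self' hm
  have h0 := sqrt_ne_zero' hm
  simp only [ContinuousLinearMap.mul_apply, grover, P, outer,
    ContinuousLinearMap.add_apply, ContinuousLinearMap.smul_apply,
    ContinuousLinearMap.one_apply, ContinuousLinearMap.smulRight_apply, innerSL_apply_apply,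
    map_add, map_smul, inner_ket, inner_ketS, ket_apply, ketS_apply]
  rw [Finset.sum_ite_eq' Finset.univ b (fun _ => (1:ℂ))]
  simp only [Finset.mem_univ, if_true, smul_smul, ← add_smul]
  congr 1
  rw [← h]
  field_simp
  by_cases hab : a = b <;> simp [hab]

lemma PG_ketS (hm : 0 < m) (r t : ℂ) (a : Fin m) :
    (P a * grover m r t) (ketS m) =
      ((r - t) / (Real.sqrt m : ℂ) + (Real.sqrt m : ℂ) * t) • ket a := by
  have h := sqrt_mul_self' hm
  have h0 := sqrt_ne_zero' hm
  simp only [ContinuousLinearMap.mul_apply, grover, P, outer,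
    ContinuousLinearMap.add_apply, ContinuousLinearMap.smul_apply,
    ContinuousLinearMap.one_apply, ContinuousLinearMap.smulRight_apply, innerSL_apply_apply,
    map_add, map_smul, inner_ket, inner_ketS, ketS_apply]
  simp only [Finset.sum_const, Finset.card_univ, Fintype.card_fin, nsmul_eq_mul,
    smul_smul, ← add_smul]
  congr 1
  rw [← h]
  field_simp

end Scratch
namespace Scratch2
open Scratch

lemma walk_apply (d : ℕ) (r t : ℂ) (θ : Fin (2*d) → ℝ) (x : Fin d → ℤ) (v : H (2*d)) :
    walkOp d r t θ (Finsupp.single x 1 ⊗ₜ[ℂ] v) =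
      ∑ a : Fin (2*d), Finsupp.single (x + eZ d a) (1:ℂ) ⊗ₜ[ℂ]
        (Complex.exp (Complex.I * (θ a : ℂ)) • ((P a * grover (2*d) r t) v)) := by
  rw [walkOp, LinearMap.sum_apply]
  refine Finset.sum_congr rfl fun a _ => ?_
  rw [TensorProduct.map_tmul]
  simp [T, Finsupp.mapDomain_single]

lemma walk_apply_ket (d : ℕ) (hd : 1 ≤ d) (r t : ℂ) (θ : Fin (2*d) → ℝ) (x : Fin d → ℤ)
    (b : Fin (2*d)) :
    walkOp d r t θ (Finsupp.single x 1 ⊗ₜ[ℂ] ket b) =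
      ∑ a : Fin (2*d), (Complex.exp (Complex.I * (θ a : ℂ)) *
          (t + (r - t) * (if a = b then 1 else 0))) •
        (Finsupp.single (x + eZ d a) (1:ℂ) ⊗ₜ[ℂ] ket a) := by
  rw [walk_apply]
  refine Finset.sum_congr rfl fun a _ => ?_
  rw [PG_ket (by omega) r t a b, smul_smul, TensorProduct.tmul_smul]

lemma walk_apply_ketS (d : ℕ) (hd : 1 ≤ d) (r t : ℂ) (θ : Fin (2*d) → ℝ) (x : Fin d → ℤ) :
    walkOp d r t θ (Finsupp.single x 1 ⊗ₜ[ℂ] ketS (2*d)) =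
      ∑ a : Fin (2*d), (Complex.exp (Complex.I * (θ a : ℂ)) *
          ((r - t) / (Real.sqrt (2*d) : ℂ) + (Real.sqrt (2*d) : ℂ) * t)) •
        (Finsupp.single (x + eZ d a) (1:ℂ) ⊗ₜ[ℂ] ket a) := by
  rw [walk_apply]
  refine Finset.sum_congr rfl fun a _ => ?_
  rw [PG_ketS (by omega) r t a, smul_smul, TensorProduct.tmul_smul]
  norm_cast

end Scratch2
namespace Scratch3
open Scratch Scratch2

lemma Xi_one (m : ℕ) (r t : ℂ) (a : Fin 1 → Fin m) : Xi m 1 r t a = 1 := by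
  simp [Xi]

lemma Xi_cons (m n : ℕ) (hn : 0 < n) (r t : ℂ) (a0 : Fin m) (a' : Fin n → Fin m) :
    Xi m (n+1) r t (Fin.cons a0 a') =
      (t + (r - t) * (if a0 = a' ⟨0, hn⟩ then 1 else 0)) * Xi m n r t a' := by
  rw [Xi, Fin.prod_univ_succ]
  congr 1
  · have h1 : ((0 : Fin (n+1)) : ℕ) + 1 < n + 1 := by simp [hn]
    rw [dif_pos h1]
    have : (⟨((0 : Fin (n+1)) : ℕ) + 1, h1⟩ : Fin (n+1)) = Fin.succ ⟨0, hn⟩ := rfl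
    rw [this, Fin.cons_succ, Fin.cons_zero]
  · rw [Xi]
    refine Finset.prod_congr rfl fun j _ => ?_
    by_cases hj : (j : ℕ) + 1 < n
    · have h2 : ((Fin.succ j : Fin (n+1)) : ℕ) + 1 < n + 1 := by simp; omega
      rw [dif_pos h2, dif_pos hj]
      have e2 : (⟨((Fin.succ j : Fin (n+1)) : ℕ) + 1, h2⟩ : Fin (n+1)) =
          Fin.succ ⟨(j : ℕ) + 1, hj⟩ := rfl
      rw [e2, Fin.cons_succ, Fin.cons_succ]
    · have h2 : ¬ (((Fin.succ j : Fin (n+1)) : ℕ) + 1 < n + 1) := by simp; omega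
      rw [dif_neg h2, dif_neg hj]

lemma main_aux (d : ℕ) (hd : 1 ≤ d) (r t : ℂ) :
    ∀ (n : ℕ) (hn : 0 < n) (θ : Fin n → Fin (2*d) → ℝ) (x : Fin d → ℤ),
    (List.ofFn (fun j : Fin n => walkOp d r t (θ j))).prod
        (Finsupp.single x (1 : ℂ) ⊗ₜ[ℂ] ketS (2 * d))
      = ∑ a : Fin n → Fin (2 * d),
          (Complex.exp (Complex.I * ((∑ j : Fin n, θ j (a j) : ℝ) : ℂ)) *
            Xi (2 * d) n r t a *
            ((r - t) / (Real.sqrt (2 * d) : ℂ) + (Real.sqrt (2 * d) : ℂ) * t)) •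
            (Finsupp.single (x + ∑ j : Fin n, eZ d (a j)) (1 : ℂ) ⊗ₜ[ℂ]
              ket (a ⟨0, hn⟩)) := by
  intro n
  induction n with
  | zero => omega
  | succ k ih =>
    intro hn θ x
    rw [List.ofFn_succ, List.prod_cons, Module.End.mul_apply]
    rcases Nat.eq_zero_or_pos k with hk | hk
    · subst hk
      simp only [List.ofFn_zero, List.prod_nil, Module.End.one_apply]
      rw [walk_apply_ketS d hd r t (θ 0) x]
      rw [← Fintype.sum_equiv (Equiv.funUnique (Fin 1) (Fin (2*d))).symm _ _ (fun b => rfl)]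
      refine Finset.sum_congr rfl fun b _ => ?_
      rw [Xi_one]
      simp [Fin.sum_univ_one]
    · rw [ih hk (fun j => θ j.succ) x]
      rw [map_sum]
      have step : ∀ a' : Fin k → Fin (2*d),
          walkOp d r t (θ 0)
            ((Complex.exp (Complex.I * ((∑ j : Fin k, θ j.succ (a' j) : ℝ) : ℂ)) *
              Xi (2 * d) k r t a' *
              ((r - t) / (Real.sqrt (2 * d) : ℂ) + (Real.sqrt (2 * d) : ℂ) * t)) •
              (Finsupp.single (x + ∑ j : Fin k, eZ d (a' j)) (1 : ℂ) ⊗ₜ[ℂ]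
                ket (a' ⟨0, hk⟩)))
          = ∑ a0 : Fin (2*d),
              ((Complex.exp (Complex.I * ((∑ j : Fin k, θ j.succ (a' j) : ℝ) : ℂ)) *
                Xi (2 * d) k r t a' *
                ((r - t) / (Real.sqrt (2 * d) : ℂ) + (Real.sqrt (2 * d) : ℂ) * t)) *
               (Complex.exp (Complex.I * ((θ 0 a0 : ℝ) : ℂ)) *
                (t + (r - t) * (if a0 = a' ⟨0, hk⟩ then 1 else 0)))) •
              (Finsupp.single ((x + ∑ j : Fin k, eZ d (a' j)) + eZ d a0) (1 : ℂ) ⊗ₜ[ℂ]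
                ket a0) := by
        intro a'
        rw [map_smul, walk_apply_ket d hd r t (θ 0) _ (a' ⟨0, hk⟩), Finset.smul_sum]
        refine Finset.sum_congr rfl fun a0 _ => ?_
        rw [smul_smul]
      simp_rw [step]
      rw [Finset.sum_comm]
      rw [← Equiv.sum_comp (Fin.consEquiv (fun _ : Fin (k+1) => Fin (2*d))), Fintype.sum_prod_type]
      refine Finset.sum_congr rfl fun a0 _ => Finset.sum_congr rfl fun a' _ => ?_
      have hce : (Fin.consEquiv (fun _ : Fin (k+1) => Fin (2*d))) (a0, a') = Fin.cons a0 a' := rfl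
      rw [hce]
      congr 1
      · -- scalar
        rw [Fin.sum_univ_succ (fun j => θ j ((Fin.cons a0 a' : Fin (k+1) → Fin (2*d)) j))]
        simp only [Fin.cons_zero, Fin.cons_succ]
        rw [Xi_cons (2*d) k hk r t a0 a']
        push_cast [mul_add, Complex.exp_add]
        ring
      · -- vector
        have h1 : (Fin.cons a0 a' : Fin (k+1) → Fin (2*d)) ⟨0, hn⟩ = a0 := rfl
        have h2 : x + ∑ j : Fin k, eZ d (a' j) + eZ d a0
            = x + ∑ j : Fin (k+1), eZ d ((Fin.cons a0 a' : Fin (k+1) → Fin (2*d)) j) := by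
          rw [Fin.sum_univ_succ (fun j => eZ d ((Fin.cons a0 a' : Fin (k+1) → Fin (2*d)) j))]
          simp only [Fin.cons_zero, Fin.cons_succ]
          rw [add_assoc, add_comm (eZ d a0)]
        rw [h1, h2]

end Scratch3

/-- Lemma 3 / Lemma 4 of the paper: the `n`-step evolution of the quantum walk
with random phase shifts applied to `δ_0 ⊗ |s⟩`. -/
theorem walk_evolution (d : ℕ) (hd : 1 ≤ d) (r t : ℂ) (n : ℕ) (hn : 1 ≤ n)
    (θ : Fin n → Fin (2 * d) → ℝ) :
    (List.ofFn (fun j : Fin n => walkOp d r t (θ j))).prod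
        (Finsupp.single (0 : Fin d → ℤ) (1 : ℂ) ⊗ₜ[ℂ] ketS (2 * d))
      = ∑ a : Fin n → Fin (2 * d),
          (Complex.exp (Complex.I * ((∑ j : Fin n, θ j (a j) : ℝ) : ℂ)) *
            Xi (2 * d) n r t a *
            ((r - t) / (Real.sqrt (2 * d) : ℂ) + (Real.sqrt (2 * d) : ℂ) * t)) •
            (Finsupp.single (∑ j : Fin n, eZ d (a j)) (1 : ℂ) ⊗ₜ[ℂ]
              ket (a ⟨0, by omega⟩)) := by
  rw [Scratch3.main_aux d hd r t n hn θ 0]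
  simp only [zero_add]
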